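/- Assume conditions (B), (C) and (D) hold, and let j ≥ 1 be an integer such that [L_{−2}, L_k] = 0 for all 1 ≤ k ≤ j−1 and [L_{−2}, L_j] ≠ 0. Then [L_{−i}, L_j] ≠ 0 for every i with 1 ≤ i ≤ j+1, and moreover [L_{−j−1}, L_j] = L_{−1}. (Equations (6.3.1) and (6.2) of Section 6.) -/

import Mathlib

/- Graded Lie algebra setting: `F` a field of characteristic 3, `A` a
finite-dimensional Lie algebra over `F`, with a `ℤ`-grading `L : ℤ → Submodule F A`. -/

namespace GradedLie

variable {F A : Type*} [Field F] [CharP F 3] [LieRing A] [LieAlgebra F A]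

/-- The linear span of all brackets `⁅u, v⁆` with `u ∈ U`, `v ∈ V`. -/
def bSpan (U V : Submodule F A) : Submodule F A :=
  Submodule.span F {z | ∃ u ∈ U, ∃ v ∈ V, z = ⁅u, v⁆}

/-- `M` is an irreducible `L0`-module under the adjoint action:
`M ≠ 0` and the only `L0`-submodules of `M` are `0` and `M`. -/
def IsIrred (L0 M : Submodule F A) : Prop :=
  M ≠ ⊥ ∧ ∀ V ≤ M, bSpan L0 V ≤ V → V = ⊥ ∨ V = M

lemma mem_bSpan {U V : Submodule F A} {u v : A} (hu : u ∈ U) (hv : v ∈ V) :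
    ⁅u, v⁆ ∈ bSpan U V :=
  Submodule.subset_span ⟨u, hu, v, hv, rfl⟩

lemma bSpan_le {U V W : Submodule F A} (h : ∀ u ∈ U, ∀ v ∈ V, ⁅u, v⁆ ∈ W) :
    bSpan U V ≤ W := by
  rw [bSpan, Submodule.span_le]
  rintro z ⟨u, hu, v, hv, rfl⟩
  exact h u hu v hv

lemma bSpan_eq_bot {U V : Submodule F A} (h : ∀ u ∈ U, ∀ v ∈ V, ⁅u, v⁆ = 0) :
    bSpan U V = ⊥ :=
  le_bot_iff.mp (bSpan_le fun u hu v hv => by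
    rw [h u hu v hv]; exact Submodule.zero_mem ⊥)

lemma lie_eq_zero_of_bSpan_eq_bot {U V : Submodule F A} (h : bSpan U V = ⊥)
    {u v : A} (hu : u ∈ U) (hv : v ∈ V) : ⁅u, v⁆ = 0 := by
  have := mem_bSpan hu hv
  rw [h, Submodule.mem_bot] at this
  exact this

lemma lie_right_eq_zero_of_forall {U V : Submodule F A} {y : A}
    (h : ∀ u ∈ U, ∀ v ∈ V, ⁅⁅u, v⁆, y⁆ = 0) :
    ∀ x ∈ bSpan U V, ⁅x, y⁆ = 0 := by
  intro x hx
  induction hx using Submodule.span_induction with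
  | mem z hz => obtain ⟨u, hu, v, hv, rfl⟩ := hz; exact h u hu v hv
  | zero => simp
  | add a b _ _ ha hb => rw [add_lie, ha, hb, add_zero]
  | smul c a _ ha => rw [smul_lie, ha, smul_zero]

lemma lie_left_mem_of_forall {U V W : Submodule F A} {u : A}
    (h : ∀ a ∈ U, ∀ b ∈ V, ⁅u, ⁅a, b⁆⁆ ∈ W) :
    ∀ x ∈ bSpan U V, ⁅u, x⁆ ∈ W := by
  intro x hx
  induction hx using Submodule.span_induction with
  | mem z hz => obtain ⟨a, ha, b, hb, rfl⟩ := hz; exact h a ha b hb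
  | zero => simp
  | add a b _ _ ha hb => rw [lie_add]; exact W.add_mem ha hb
  | smul c a _ ha => rw [lie_smul]; exact W.smul_mem c ha

/-- Equations (6.3.1) and (6.2): under (B), (C), (D), if `j ≥ 1`,
`[L (-2), L k] = 0` for `1 ≤ k ≤ j-1`, and `[L (-2), L j] ≠ 0`, then
`[L (-i), L j] ≠ 0` for `1 ≤ i ≤ j+1`, and `[L (-j-1), L j] = L (-1)`. -/
theorem eq_6_3_1_and_6_2
    [FiniteDimensional F A]
    (L : ℤ → Submodule F A)
    (hdecomp : DirectSum.IsInternal L)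
    (hgrade : ∀ i j : ℤ, ∀ x ∈ L i, ∀ y ∈ L j, ⁅x, y⁆ ∈ L (i + j))
    (q r : ℤ) (hq : 1 ≤ q) (hr : 1 ≤ r)
    (hbound : ∀ i : ℤ, i < -q ∨ r < i → L i = ⊥)
    (hbot : L (-q) ≠ ⊥)
    (hB : IsIrred (L 0) (L (-1)))
    (hC : ∀ j' : ℤ, 0 ≤ j' → ∀ x ∈ L j', (∀ y ∈ L (-1), ⁅x, y⁆ = 0) → x = 0)
    (hD : ∀ i : ℤ, 1 < i → L (-i) = bSpan (L (-i + 1)) (L (-1)))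
    (j : ℤ) (hj : 1 ≤ j)
    (h0 : ∀ k : ℤ, 1 ≤ k → k ≤ j - 1 → bSpan (L (-2)) (L k) = ⊥)
    (hne : bSpan (L (-2)) (L j) ≠ ⊥) :
    (∀ i : ℤ, 1 ≤ i → i ≤ j + 1 → bSpan (L (-i)) (L j) ≠ ⊥) ∧
    bSpan (L (-j - 1)) (L j) = L (-1) := by
  -- degree of a bracket span
  have hspan_deg : ∀ a b : ℤ, bSpan (L a) (L b) ≤ L (a + b) := fun a b =>
    bSpan_le fun u hu v hv => hgrade a b u hu v hv
  -- auxiliary vanishing: [L (-m), L k] = 0 for 2 ≤ m ≤ k + 1, 1 ≤ k ≤ j - 1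
  have haux : ∀ m : ℤ, 2 ≤ m → ∀ k : ℤ, 1 ≤ k → k ≤ j - 1 → m ≤ k + 1 →
      ∀ u ∈ L (-m), ∀ v ∈ L k, ⁅u, v⁆ = 0 := by
    intro m hm
    refine Int.le_induction
      (motive := fun m _ => ∀ k : ℤ, 1 ≤ k → k ≤ j - 1 → m ≤ k + 1 →
        ∀ u ∈ L (-m), ∀ v ∈ L k, ⁅u, v⁆ = 0) ?_ ?_ m hm
    · intro k hk1 hk2 _ u hu v hv
      exact lie_eq_zero_of_bSpan_eq_bot (h0 k hk1 hk2) hu hv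
    · intro m hm ih k hk1 hk2 hmk u hu v hv
      have hD' := hD (m + 1) (by linarith)
      rw [show (-(m + 1) + 1 : ℤ) = -m by ring] at hD'
      rw [hD'] at hu
      refine lie_right_eq_zero_of_forall ?_ u hu
      intro a ha b hb
      rw [lie_lie]
      have h1 : ⁅b, v⁆ ∈ L (k - 1) := by
        have := hgrade (-1) k b hb v hv
        rwa [show (-1 + k : ℤ) = k - 1 by ring] at this
      have h2 : ⁅a, ⁅b, v⁆⁆ = 0 :=
        ih (k - 1) (by linarith) (by linarith) (by linarith) a ha _ h1
      have h3 : ⁅a, v⁆ = 0 := ih k hk1 hk2 (by linarith) a ha v hv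
      rw [h2, h3, lie_zero, sub_zero]
  -- case i = 1
  have key1 : bSpan (L (-1)) (L j) ≠ ⊥ := by
    intro hb
    have hLj : L j = ⊥ := by
      rw [Submodule.eq_bot_iff]
      intro x hx
      refine hC j (by linarith) x hx fun y hy => ?_
      have := lie_eq_zero_of_bSpan_eq_bot hb hy hx
      rw [← lie_skew, this, neg_zero]
    apply hne
    apply bSpan_eq_bot
    intro u hu v hv
    rw [hLj, Submodule.mem_bot] at hv
    rw [hv, lie_zero]
  -- cases 2 ≤ i ≤ j + 1
  have key2 : ∀ i : ℤ, 2 ≤ i → i ≤ j + 1 → bSpan (L (-i)) (L j) ≠ ⊥ := by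
    intro i hi
    refine Int.le_induction
      (motive := fun i _ => i ≤ j + 1 → bSpan (L (-i)) (L j) ≠ ⊥) ?_ ?_ i hi
    · exact fun _ => hne
    · intro i hi ih hij hcontra
      have hij' : i ≤ j := by linarith
      apply ih (by linarith)
      rw [Submodule.eq_bot_iff]
      intro x hx
      have hxdeg : x ∈ L (-i + j) := hspan_deg (-i) j hx
      refine hC (-i + j) (by linarith) x hxdeg fun y hy => ?_
      refine lie_right_eq_zero_of_forall ?_ x hx
      intro a ha b hb
      rw [lie_lie]
      have h1 : ⁅b, y⁆ ∈ L (j - 1) := by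
        have := hgrade j (-1) b hb y hy
        rwa [show (j + -1 : ℤ) = j - 1 by ring] at this
      have h2 : ⁅a, ⁅b, y⁆⁆ = 0 :=
        haux i (by linarith) (j - 1) (by linarith) le_rfl (by linarith) a ha _ h1
      have h3 : ⁅a, y⁆ ∈ L (-(i + 1)) := by
        have := hgrade (-i) (-1) a ha y hy
        rwa [show (-i + -1 : ℤ) = -(i + 1) by ring] at this
      have h4 : ⁅⁅a, y⁆, b⁆ = 0 := lie_eq_zero_of_bSpan_eq_bot hcontra h3 hb
      have h5 : ⁅b, ⁅a, y⁆⁆ = 0 := by rw [← lie_skew, h4, neg_zero]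
      rw [h2, h5, sub_zero]
  have part1 : ∀ i : ℤ, 1 ≤ i → i ≤ j + 1 → bSpan (L (-i)) (L j) ≠ ⊥ := by
    intro i h1 h2
    rcases eq_or_lt_of_le h1 with h | h
    · rw [← h]; exact key1
    · exact key2 i (by linarith) h2
  refine ⟨part1, ?_⟩
  -- part 2
  have hVne : bSpan (L (-j - 1)) (L j) ≠ ⊥ := by
    have := part1 (j + 1) (by linarith) le_rfl
    rwa [show (-(j + 1) : ℤ) = -j - 1 by ring] at this
  have hVle : bSpan (L (-j - 1)) (L j) ≤ L (-1) := by
    refine bSpan_le fun u hu v hv => ?_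
    have := hgrade (-j - 1) j u hu v hv
    rwa [show (-j - 1 + j : ℤ) = -1 by ring] at this
  have hVsub : bSpan (L 0) (bSpan (L (-j - 1)) (L j)) ≤ bSpan (L (-j - 1)) (L j) := by
    refine bSpan_le fun u hu x hx => ?_
    refine lie_left_mem_of_forall ?_ x hx
    intro a ha b hb
    rw [leibniz_lie]
    refine Submodule.add_mem _ (mem_bSpan ?_ hb) (mem_bSpan ha ?_)
    · have := hgrade 0 (-j - 1) u hu a ha
      rwa [show (0 + (-j - 1) : ℤ) = -j - 1 by ring] at this
    · have := hgrade 0 j u hu b hb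
      rwa [zero_add] at this
  rcases hB.2 _ hVle hVsub with h | h
  · exact absurd h hVne
  · exact h

end GradedLie
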